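/- Under assumptions (A3) and (A4), for every t > 0 one has ETP_w(t) ≥ ETP(t), i.e., Σ_{i=1}^m π_i·F_i(φ(π_i)·ω·t) ≥ Σ_{i=1}^m π_i·F_i(t). -/

import Mathlib

open scoped BigOperators

/-- `φ(x) = (x/(1-x))^{1/k}`. -/
noncomputable def phi (k x : ℝ) : ℝ := (x / (1 - x)) ^ (1 / k)

lemma phi_pos {k x : ℝ} (hx : 0 < x) (hx1 : x < 1) : 0 < phi k x :=
  Real.rpow_pos_of_pos (div_pos hx (by linarith)) _

lemma phi_eq {k x : ℝ} (hx : 0 < x) (hx1 : x < 1) :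
    phi k x = x ^ (1/k) / (1 - x) ^ (1/k) := by
  unfold phi
  rw [Real.div_rpow hx.le (by linarith : (0:ℝ) ≤ 1 - x)]

lemma phi_mul {k x : ℝ} (hx : 0 < x) (hx1 : x < 1) :
    phi k x * (1 - x) = (1 - x) ^ (1 - 1/k) * x ^ (1/k) := by
  have h1 : (0:ℝ) < 1 - x := by linarith
  have h1p : 0 < (1 - x) ^ (1/k) := Real.rpow_pos_of_pos h1 _
  rw [phi_eq hx hx1, Real.rpow_sub h1, Real.rpow_one]
  field_simp

lemma div_phi {k x : ℝ} (hx : 0 < x) (hx1 : x < 1) :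
    x / phi k x = (1 - x) ^ (1/k) * x ^ (1 - 1/k) := by
  have hxp : 0 < x ^ (1/k) := Real.rpow_pos_of_pos hx _
  have h1p : 0 < (1 - x) ^ (1/k) := Real.rpow_pos_of_pos (by linarith) _
  rw [phi_eq hx hx1, Real.rpow_sub hx, Real.rpow_one]
  field_simp

theorem straw_ETP_dominates (m : ℕ) (hm : 1 ≤ m) (k : ℝ) (hk : 0 < k)
    (pr : Fin m → ℝ) (hpr : ∀ i, pr i ∈ Set.Ioo (0 : ℝ) 1)
    (F : Fin m → ℝ → ℝ)
    (hFmono : ∀ i, MonotoneOn (F i) (Set.Ici 0))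
    (hFrange : ∀ i, ∀ t, 0 ≤ t → F i t ∈ Set.Icc (0 : ℝ) 1)
    (hF0 : ∀ i, F i 0 = 0)
    (ω : ℝ)
    (hω : ω = (∑ i, (1 - pr i)) / (∑ i, phi k (pr i) * (1 - pr i)))
    -- Assumption (A3)
    (hA3 : ∀ t' > (0 : ℝ), ∀ a : Fin m → ℝ, (∀ i, a i ∈ Set.Ioo (0 : ℝ) 1) →
      (∑ i, a i) = 1 → ∀ x : Fin m → ℝ, (∀ i, 0 < x i) →
        ∑ i, a i * F i (t' / x i) ≥ ∑ i, a i * F i (t' / ∑ j, a j * x j))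
    -- Assumption (A4)
    (hA4 : (∑ i, (1 - pr i)) * (∑ i, pr i) ≥
      (∑ i, (1 - pr i) ^ (1 - 1 / k) * pr i ^ (1 / k)) *
      (∑ i, (1 - pr i) ^ (1 / k) * pr i ^ (1 - 1 / k))) :
    ∀ t > (0 : ℝ), ∑ i, pr i * F i (phi k (pr i) * ω * t) ≥ ∑ i, pr i * F i t := by
  intro t ht
  have hpr0 : ∀ i, 0 < pr i := fun i => (hpr i).1
  have hpr1 : ∀ i, pr i < 1 := fun i => (hpr i).2
  have hphi : ∀ i, 0 < phi k (pr i) := fun i => phi_pos (hpr0 i) (hpr1 i)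
  -- positivity of the sums
  have hne : (Finset.univ : Finset (Fin m)).Nonempty := by
    have : Nonempty (Fin m) := Fin.pos_iff_nonempty.mp (by omega)
    exact Finset.univ_nonempty
  have hP : 0 < ∑ i, pr i :=
    Finset.sum_pos (fun i _ => hpr0 i) hne
  have hN : 0 < ∑ i, (1 - pr i) :=
    Finset.sum_pos (fun i _ => by have := hpr1 i; linarith) hne
  have hD : 0 < ∑ i, phi k (pr i) * (1 - pr i) :=
    Finset.sum_pos (fun i _ => mul_pos (hphi i) (by have := hpr1 i; linarith)) hne
  have hωpos : 0 < ω := hω ▸ div_pos hN hD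
  -- m = 1 case
  rcases eq_or_lt_of_le hm with hm1 | hm2
  · -- m = 1
    subst hm1
    simp only [Fin.sum_univ_one] at hω ⊢
    have h3 : (0:ℝ) < 1 - pr 0 := by have := hpr1 0; linarith
    have : phi k (pr 0) * ω * t = t := by
      rw [hω]; field_simp
      rw [div_self (hphi 0).ne']
    rw [this]
  · -- m ≥ 2
    have h2m : 2 ≤ m := hm2
    set P := ∑ i, pr i with hPdef
    set a : Fin m → ℝ := fun i => pr i / P with ha
    set x : Fin m → ℝ := fun i => 1 / (phi k (pr i) * ω) with hx
    have hxpos : ∀ i, 0 < x i := fun i => by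
      simp only [hx]
      exact one_div_pos.mpr (mul_pos (hphi i) hωpos)
    have haIoo : ∀ i, a i ∈ Set.Ioo (0:ℝ) 1 := by
      intro i
      constructor
      · exact div_pos (hpr0 i) hP
      · rw [div_lt_one hP]
        have : Nontrivial (Fin m) := Fin.nontrivial_iff_two_le.mpr h2m
        obtain ⟨j, hj⟩ := exists_ne i
        exact Finset.single_lt_sum hj (Finset.mem_univ i) (Finset.mem_univ j)
          (hpr0 j) (fun l _ _ => (hpr0 l).le)
    have hasum : (∑ i, a i) = 1 := by
      simp only [ha]
      rw [← Finset.sum_div, div_self hP.ne']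
    -- the weighted average S
    set S := ∑ j, a j * x j with hS
    have hSpos : 0 < S :=
      Finset.sum_pos (fun i _ => mul_pos (haIoo i).1 (hxpos i)) hne
    -- rewrite A4 into: D * Q ≤ N * P where Q = ∑ pr i / phi
    have hDrw : (∑ i, phi k (pr i) * (1 - pr i))
        = ∑ i, (1 - pr i) ^ (1 - 1/k) * pr i ^ (1/k) :=
      Finset.sum_congr rfl fun i _ => phi_mul (hpr0 i) (hpr1 i)
    have hQrw : (∑ i, pr i / phi k (pr i))
        = ∑ i, (1 - pr i) ^ (1/k) * pr i ^ (1 - 1/k) :=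
      Finset.sum_congr rfl fun i _ => div_phi (hpr0 i) (hpr1 i)
    have hkey : (∑ i, phi k (pr i) * (1 - pr i)) * (∑ i, pr i / phi k (pr i))
        ≤ (∑ i, (1 - pr i)) * P := by
      rw [hDrw, hQrw]; exact hA4
    -- S ≤ 1
    have hSle : S ≤ 1 := by
      have hSeq : S = (∑ i, pr i / phi k (pr i)) / (P * ω) := by
        rw [hS, Finset.sum_div]
        refine Finset.sum_congr rfl fun i _ => ?_
        simp only [ha, hx]
        field_simp
      rw [hSeq, div_le_one (mul_pos hP hωpos), hω, ← mul_div_assoc,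
        le_div_iff₀ hD]
      nlinarith [hkey]
    -- apply A3
    have hA3' := hA3 t ht a haIoo hasum x hxpos
    -- t / x i = phi k (pr i) * ω * t
    have harg : ∀ i, t / x i = phi k (pr i) * ω * t := by
      intro i
      simp only [hx, one_div]
      rw [div_eq_mul_inv, inv_inv]
      ring
    simp only [harg] at hA3'
    -- F i (t / S) ≥ F i t
    have hts : t ≤ t / S := by
      rw [le_div_iff₀ hSpos]
      nlinarith
    have hstep : ∑ i, a i * F i t ≤ ∑ i, a i * F i (t / S) := by
      refine Finset.sum_le_sum fun i _ => ?_
      refine mul_le_mul_of_nonneg_left ?_ (haIoo i).1.le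
      exact hFmono i (Set.mem_Ici.mpr ht.le) (Set.mem_Ici.mpr (by positivity)) hts
    rw [← hS] at hA3'
    have hmain : ∑ i, a i * F i t ≤ ∑ i, a i * F i (phi k (pr i) * ω * t) :=
      le_trans hstep hA3'
    -- multiply by P
    have hfin : ∀ u : ℝ, ∑ i, pr i * F i u = P * ∑ i, a i * F i u := by
      intro u
      rw [Finset.mul_sum]
      refine Finset.sum_congr rfl fun i _ => ?_
      simp only [ha]
      field_simp
    calc ∑ i, pr i * F i (phi k (pr i) * ω * t)
        = P * ∑ i, a i * F i (phi k (pr i) * ω * t) := by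
          rw [Finset.mul_sum]
          refine Finset.sum_congr rfl fun i _ => ?_
          simp only [ha]; field_simp
      _ ≥ P * ∑ i, a i * F i t := mul_le_mul_of_nonneg_left hmain hP.le
      _ = ∑ i, pr i * F i t := (hfin t).symm
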